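/- Let X be a zigzag poset (a finite poset whose Hasse diagram is a path x_0 — x_1 — ... — x_n with arbitrary orientations), F a sheaf of vector spaces on X, and ι : X' ↪ X the inclusion of the alternating subposet consisting of the alternating sequence of minimal and internal maximal elements of X. Then lim F ≅ lim ι*F, where ι*F = F restricted to X'. -/

import Mathlib

open CategoryTheory

/-! Zigzag posets.  A zigzag poset is a finite poset whose Hasse diagram is a path
`x_0 — x_1 — ... — x_n` with arbitrarily oriented edges.  We encode the orientation
of the edge between `x_l` and `x_{l+1}` by `o l : Bool` (`true` means `x_l < x_{l+1}`),
and `x_i ≤ x_j` iff all the edges between them point from `x_i` towards `x_j`. -/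

/-- The order relation of the zigzag poset with edge orientations `o`. -/
def zigzagLE (o : ℕ → Bool) (i j : ℕ) : Prop :=
  (i ≤ j ∧ ∀ l, i ≤ l → l < j → o l = true) ∨
  (j ≤ i ∧ ∀ l, j ≤ l → l < i → o l = false)

theorem zigzagLE_refl (o : ℕ → Bool) (i : ℕ) : zigzagLE o i i :=
  Or.inl ⟨le_rfl, fun _ h1 h2 => absurd (lt_of_le_of_lt h1 h2) (lt_irrefl _)⟩

theorem zigzagLE_trans (o : ℕ → Bool) (i j l : ℕ)
    (h1 : zigzagLE o i j) (h2 : zigzagLE o j l) : zigzagLE o i l := by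
  rcases h1 with ⟨hij, hup1⟩ | ⟨hji, hdn1⟩ <;> rcases h2 with ⟨hjl, hup2⟩ | ⟨hlj, hdn2⟩
  · refine Or.inl ⟨le_trans hij hjl, fun m hm1 hm2 => ?_⟩
    rcases Nat.lt_or_ge m j with h | h
    · exact hup1 m hm1 h
    · exact hup2 m h hm2
  · rcases le_or_gt i l with h | h
    · exact Or.inl ⟨h, fun m hm1 hm2 => hup1 m hm1 (lt_of_lt_of_le hm2 hlj)⟩
    · exact Or.inr ⟨le_of_lt h, fun m hm1 hm2 => hdn2 m hm1 (lt_of_lt_of_le hm2 hij)⟩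
  · rcases le_or_gt i l with h | h
    · exact Or.inl ⟨h, fun m hm1 hm2 => hup2 m (le_trans hji hm1) hm2⟩
    · exact Or.inr ⟨le_of_lt h, fun m hm1 hm2 => hdn1 m (le_trans hjl hm1) hm2⟩
  · refine Or.inr ⟨le_trans hlj hji, fun m hm1 hm2 => ?_⟩
    rcases Nat.lt_or_ge m j with h | h
    · exact hdn2 m hm1 h
    · exact hdn1 m h hm2

theorem zigzagLE_antisymm (o : ℕ → Bool) (i j : ℕ)
    (h1 : zigzagLE o i j) (h2 : zigzagLE o j i) : i = j := by
  rcases h1 with ⟨hij, hup1⟩ | ⟨hji, hdn1⟩ <;>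
    rcases h2 with ⟨hji', hup2⟩ | ⟨hij', hdn2⟩
  · omega
  · rcases Nat.lt_or_ge i j with h | h
    · have ht := hup1 i le_rfl h
      have hf := hdn2 i le_rfl h
      simp [ht] at hf
    · omega
  · rcases Nat.lt_or_ge j i with h | h
    · have ht := hup2 j le_rfl h
      have hf := hdn1 j le_rfl h
      simp [ht] at hf
    · omega
  · omega

/-- The zigzag poset on `{x_0, ..., x_n}` with edge orientations `o`. -/
def Zigzag (n : ℕ) (o : ℕ → Bool) : Type := Fin (n + 1)

instance (n : ℕ) (o : ℕ → Bool) : PartialOrder (Zigzag n o) where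
  le i j := zigzagLE o (Fin.val i) (Fin.val j)
  le_refl i := zigzagLE_refl o _
  le_trans i j l := zigzagLE_trans o _ _ _
  le_antisymm i j h1 h2 := Fin.ext (zigzagLE_antisymm o _ _ h1 h2)

/-- The index of a point of the zigzag poset. -/
def Zigzag.idx {n : ℕ} {o : ℕ → Bool} (x : Zigzag n o) : ℕ := Fin.val x

/-- The alternating subposet `X' ⊆ X`: all minimal elements together with the
internal maximal elements (the maximal elements flanked by minimal elements on
both sides); this is the alternating sequence of minimal and internal maximal
elements of the zigzag. -/
def altSet (n : ℕ) (o : ℕ → Bool) : Set (Zigzag n o) :=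
  {x | IsMin x ∨ (IsMax x ∧ (∃ y : Zigzag n o, IsMin y ∧ y.idx < x.idx) ∧
    (∃ y : Zigzag n o, IsMin y ∧ x.idx < y.idx))}

/-- The alternating subposet, with the induced order. -/
def AltSub (n : ℕ) (o : ℕ → Bool) : Type := {x : Zigzag n o // x ∈ altSet n o}

instance (n : ℕ) (o : ℕ → Bool) : PartialOrder (AltSub n o) :=
  inferInstanceAs (PartialOrder {x : Zigzag n o // x ∈ altSet n o})

/-- The inclusion `ι : X' ↪ X` is order preserving. -/
lemma altIncl_monotone (n : ℕ) (o : ℕ → Bool) :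
    Monotone (fun x : AltSub n o => (x.val : Zigzag n o)) := fun _ _ h => h

/-- The restriction (pullback) functor `ι*` of sheaves along the inclusion of the
alternating subposet. -/
noncomputable def restrictAlt (n : ℕ) (o : ℕ → Bool) (C : Type*) [Category C] :
    (Zigzag n o ⥤ C) ⥤ (AltSub n o ⥤ C) :=
  (Functor.whiskeringLeft (AltSub n o) (Zigzag n o) C).obj (altIncl_monotone n o).functor

open CategoryTheory.Limits

/-! ### Auxiliary machinery -/

/-- Descend to the left while the edge points up. -/
def leftD (o : ℕ → Bool) : ℕ → ℕ
  | 0 => 0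
  | (x+1) => if o x = true then leftD o x else x + 1

lemma leftD_le (o : ℕ → Bool) (x : ℕ) : leftD o x ≤ x := by
  induction x with
  | zero => simp [leftD]
  | succ x ih =>
    simp only [leftD]
    split
    · omega
    · omega

lemma leftD_edges (o : ℕ → Bool) (x : ℕ) :
    ∀ l, leftD o x ≤ l → l < x → o l = true := by
  induction x with
  | zero => intro l h1 h2; omega
  | succ x ih =>
    intro l h1 h2
    simp only [leftD] at h1
    split at h1
    · rcases Nat.lt_or_ge l x with h | h
      · exact ih l h1 h
      · have hl : l = x := by omega
        subst hl; assumption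
    · omega

lemma leftD_stop (o : ℕ → Bool) (x : ℕ) :
    leftD o x = 0 ∨ o (leftD o x - 1) = false := by
  induction x with
  | zero => left; rfl
  | succ x ih =>
    simp only [leftD]
    split
    · exact ih
    · right
      simp only [Nat.add_sub_cancel]
      rename_i h
      simpa using h

/-- Descend to the right while the edge points down. -/
def rightD (o : ℕ → Bool) (n : ℕ) (x : ℕ) : ℕ :=
  if x < n ∧ o x = false then rightD o n (x + 1) else x
termination_by n - x
decreasing_by rename_i h; omega

lemma le_rightD (o : ℕ → Bool) (n x : ℕ) : x ≤ rightD o n x := by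
  rw [rightD]
  split
  · have := le_rightD o n (x + 1)
    omega
  · exact le_rfl
termination_by n - x
decreasing_by rename_i h; omega

lemma rightD_le (o : ℕ → Bool) (n x : ℕ) (h : x ≤ n) : rightD o n x ≤ n := by
  rw [rightD]
  split
  · rename_i h'
    exact rightD_le o n (x + 1) (by omega)
  · exact h
termination_by n - x
decreasing_by omega

lemma rightD_edges (o : ℕ → Bool) (n x : ℕ) :
    ∀ l, x ≤ l → l < rightD o n x → o l = false := by
  intro l h1 h2
  rw [rightD] at h2
  split at h2
  · rcases Nat.lt_or_ge x l with h | h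
    · exact rightD_edges o n (x + 1) l (by omega) h2
    · have hl : l = x := by omega
      subst hl
      rename_i hc
      exact hc.2
  · omega
termination_by n - x
decreasing_by rename_i h _ _; omega

lemma rightD_stop (o : ℕ → Bool) (n x : ℕ) (h : x ≤ n) :
    rightD o n x = n ∨ o (rightD o n x) = true := by
  rw [rightD]
  split
  · rename_i h'
    exact rightD_stop o n (x + 1) (by omega)
  · rename_i h'
    rcases Nat.lt_or_ge x n with hlt | hge
    · right
      by_contra hc
      exact h' ⟨hlt, by simpa using hc⟩
    · left; omega
termination_by n - x
decreasing_by omega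

/-- The index of a canonical minimal element below `x`. -/
def minIdx (o : ℕ → Bool) (n x : ℕ) : ℕ := leftD o (rightD o n x)

lemma minIdx_le (o : ℕ → Bool) (n x : ℕ) (h : x ≤ n) : minIdx o n x ≤ n :=
  le_trans (leftD_le o _) (rightD_le o n x h)

lemma minIdx_left_stop (o : ℕ → Bool) (n x : ℕ) :
    minIdx o n x = 0 ∨ o (minIdx o n x - 1) = false :=
  leftD_stop o _

lemma minIdx_right_stop (o : ℕ → Bool) (n x : ℕ) (h : x ≤ n) :
    minIdx o n x = n ∨ o (minIdx o n x) = true := by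
  unfold minIdx
  rcases Nat.lt_or_ge (leftD o (rightD o n x)) (rightD o n x) with hlt | hge
  · right; exact leftD_edges o _ _ le_rfl hlt
  · have heq : leftD o (rightD o n x) = rightD o n x :=
      le_antisymm (leftD_le o _) hge
    rw [heq]
    exact rightD_stop o n x h

lemma minIdx_zle (o : ℕ → Bool) (n x : ℕ) : zigzagLE o (minIdx o n x) x := by
  refine zigzagLE_trans o _ (rightD o n x) _ ?_ ?_
  · exact Or.inl ⟨leftD_le o _, leftD_edges o _⟩
  · exact Or.inr ⟨le_rightD o n x, rightD_edges o n x⟩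

/-- The canonical minimal element below `x` in the zigzag poset. -/
def minElt {n : ℕ} {o : ℕ → Bool} (x : Zigzag n o) : Zigzag n o :=
  (⟨minIdx o n (Fin.val x), by
    have h1 : Fin.val x < n + 1 := Fin.is_lt x
    have h2 := minIdx_le o n (Fin.val x) (by omega)
    omega⟩ : Fin (n + 1))

lemma minElt_val {n : ℕ} {o : ℕ → Bool} (x : Zigzag n o) :
    Fin.val (minElt x) = minIdx o n (Fin.val x) := rfl

lemma minElt_le {n : ℕ} {o : ℕ → Bool} (x : Zigzag n o) : minElt x ≤ x :=
  minIdx_zle o n (Fin.val x)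

lemma isMin_minElt {n : ℕ} {o : ℕ → Bool} (x : Zigzag n o) : IsMin (minElt x) := by
  intro c hc
  have hcn : Fin.val c < n + 1 := Fin.is_lt c
  have hxn : Fin.val x < n + 1 := Fin.is_lt x
  suffices h : c = minElt x from le_of_eq h.symm
  change zigzagLE o (Fin.val c) (minIdx o n (Fin.val x)) at hc
  rcases hc with ⟨h1, h2⟩ | ⟨h1, h2⟩
  · rcases Nat.lt_or_ge (Fin.val c) (minIdx o n (Fin.val x)) with hlt | hge
    · exfalso
      have ht := h2 (minIdx o n (Fin.val x) - 1) (by omega) (by omega)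
      rcases minIdx_left_stop o n (Fin.val x) with h0 | hf
      · omega
      · rw [ht] at hf; exact Bool.noConfusion hf
    · exact Fin.ext (by rw [minElt_val]; omega)
  · rcases Nat.lt_or_ge (minIdx o n (Fin.val x)) (Fin.val c) with hlt | hge
    · exfalso
      have hf := h2 (minIdx o n (Fin.val x)) le_rfl hlt
      rcases minIdx_right_stop o n (Fin.val x) (by omega) with h0 | ht
      · omega
      · rw [hf] at ht; exact Bool.noConfusion ht
    · exact Fin.ext (by rw [minElt_val]; omega)

lemma minElt_mem {n : ℕ} {o : ℕ → Bool} (x : Zigzag n o) : minElt x ∈ altSet n o :=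
  Or.inl (isMin_minElt x)

/-- Two elements of the alternating subposet below a common `x` admit an upper bound
in the alternating subposet below `x`. -/
lemma alt_upper_bound {n : ℕ} {o : ℕ → Bool} (x a b : Zigzag n o)
    (ha : a ∈ altSet n o) (hb : b ∈ altSet n o) (hax : a ≤ x) (hbx : b ≤ x) :
    ∃ c : Zigzag n o, c ∈ altSet n o ∧ c ≤ x ∧ a ≤ c ∧ b ≤ c := by
  rcases ha with hamin | hamax
  · rcases hb with hbmin | hbmax
    · -- both minimal
      rcases hax with ⟨h1, h2⟩ | ⟨h1, h2⟩ <;> rcases hbx with ⟨h3, h4⟩ | ⟨h3, h4⟩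
      · -- both below-left (edges up)
        rcases le_total (Fin.val a) (Fin.val b) with hab | hba
        · exact ⟨b, Or.inl hbmin, Or.inl ⟨h3, h4⟩,
            Or.inl ⟨hab, fun l hl1 hl2 => h2 l hl1 (by omega)⟩, le_rfl⟩
        · exact ⟨a, Or.inl hamin, Or.inl ⟨h1, h2⟩, le_rfl,
            Or.inl ⟨hba, fun l hl1 hl2 => h4 l hl1 (by omega)⟩⟩
      · -- a below-left, b below-right
        rcases eq_or_lt_of_le h1 with heq | hlt1
        · have hax' : a = x := Fin.ext heq
          subst hax'
          exact ⟨a, Or.inl hamin, zigzagLE_refl o _, le_rfl, Or.inr ⟨h3, h4⟩⟩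
        rcases eq_or_lt_of_le h3 with heq | hlt2
        · have hbx' : b = x := Fin.ext heq.symm
          subst hbx'
          exact ⟨b, Or.inl hbmin, zigzagLE_refl o _, Or.inl ⟨h1, h2⟩, le_rfl⟩
        · have hxmax : IsMax x := by
            intro y hy
            suffices h : y = x from le_of_eq h
            rcases hy with ⟨h5, h6⟩ | ⟨h5, h6⟩
            · rcases eq_or_lt_of_le h5 with heq | hlt
              · exact Fin.ext heq.symm
              · exfalso
                have ht := h6 (Fin.val x) le_rfl hlt
                have hf := h4 (Fin.val x) le_rfl hlt2
                rw [ht] at hf; exact Bool.noConfusion hf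
            · rcases eq_or_lt_of_le h5 with heq | hlt
              · exact Fin.ext heq
              · exfalso
                have hf := h6 (Fin.val x - 1) (by omega) (by omega)
                have ht := h2 (Fin.val x - 1) (by omega) (by omega)
                rw [ht] at hf; exact Bool.noConfusion hf
          exact ⟨x, Or.inr ⟨hxmax, ⟨a, hamin, hlt1⟩, ⟨b, hbmin, hlt2⟩⟩,
            zigzagLE_refl o _, Or.inl ⟨h1, h2⟩, Or.inr ⟨h3, h4⟩⟩
      · -- a below-right, b below-left
        rcases eq_or_lt_of_le h1 with heq | hlt1
        · have hax' : a = x := Fin.ext heq.symm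
          subst hax'
          exact ⟨a, Or.inl hamin, zigzagLE_refl o _, le_rfl, Or.inl ⟨h3, h4⟩⟩
        rcases eq_or_lt_of_le h3 with heq | hlt2
        · have hbx' : b = x := Fin.ext heq
          subst hbx'
          exact ⟨b, Or.inl hbmin, zigzagLE_refl o _, Or.inr ⟨h1, h2⟩, le_rfl⟩
        · have hxmax : IsMax x := by
            intro y hy
            suffices h : y = x from le_of_eq h
            rcases hy with ⟨h5, h6⟩ | ⟨h5, h6⟩
            · rcases eq_or_lt_of_le h5 with heq | hlt
              · exact Fin.ext heq.symm
              · exfalso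
                have ht := h6 (Fin.val x) le_rfl hlt
                have hf := h2 (Fin.val x) le_rfl hlt1
                rw [ht] at hf; exact Bool.noConfusion hf
            · rcases eq_or_lt_of_le h5 with heq | hlt
              · exact Fin.ext heq
              · exfalso
                have hf := h6 (Fin.val x - 1) (by omega) (by omega)
                have ht := h4 (Fin.val x - 1) (by omega) (by omega)
                rw [ht] at hf; exact Bool.noConfusion hf
          exact ⟨x, Or.inr ⟨hxmax, ⟨b, hbmin, hlt2⟩, ⟨a, hamin, hlt1⟩⟩,
            zigzagLE_refl o _, Or.inr ⟨h1, h2⟩, Or.inl ⟨h3, h4⟩⟩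
      · -- both below-right (edges down)
        rcases le_total (Fin.val a) (Fin.val b) with hab | hba
        · exact ⟨a, Or.inl hamin, Or.inr ⟨h1, h2⟩, le_rfl,
            Or.inr ⟨hab, fun l hl1 hl2 => h4 l (by omega) hl2⟩⟩
        · exact ⟨b, Or.inl hbmin, Or.inr ⟨h3, h4⟩,
            Or.inr ⟨hba, fun l hl1 hl2 => h2 l (by omega) hl2⟩, le_rfl⟩
    · -- b maximal
      exact ⟨b, Or.inr hbmax, hbx, le_trans hax (hbmax.1 hbx), le_rfl⟩
  · -- a maximal
    exact ⟨a, Or.inr hamax, hax, le_rfl, le_trans hbx (hamax.1 hax)⟩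

instance altInitial (n : ℕ) (o : ℕ → Bool) :
    (altIncl_monotone n o).functor.Initial := by
  constructor
  intro x
  have hne : Nonempty (CostructuredArrow (altIncl_monotone n o).functor x) :=
    ⟨CostructuredArrow.mk (Y := (⟨minElt x, minElt_mem x⟩ : AltSub n o))
      (homOfLE (minElt_le x))⟩
  apply isConnected_of_zigzag
  intro j₁ j₂
  obtain ⟨c, hc, hcx, h1, h2⟩ := alt_upper_bound x j₁.left.val j₂.left.val
    j₁.left.prop j₂.left.prop (leOfHom j₁.hom) (leOfHom j₂.hom)
  let jc : CostructuredArrow (altIncl_monotone n o).functor x :=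
    CostructuredArrow.mk (Y := (⟨c, hc⟩ : AltSub n o)) (homOfLE hcx)
  have hle1 : j₁.left ≤ (⟨c, hc⟩ : AltSub n o) := h1
  have hle2 : j₂.left ≤ (⟨c, hc⟩ : AltSub n o) := h2
  refine ⟨[jc, j₂], List.Chain.cons ?_ (List.Chain.cons ?_ List.Chain.nil), rfl⟩
  · exact Or.inl ⟨CostructuredArrow.homMk (homOfLE hle1) (Subsingleton.elim _ _)⟩
  · exact Or.inr ⟨CostructuredArrow.homMk (homOfLE hle2) (Subsingleton.elim _ _)⟩

/-- Let `X` be a zigzag poset, `F` a sheaf of vector spaces on `X`,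
and `ι : X' ↪ X` the inclusion of the alternating subposet.  Then
`lim F ≅ lim ι*F`. -/
theorem lim_zigzag_alt_iso (k : Type) [Field k] (n : ℕ) (o : ℕ → Bool)
    (F : Zigzag n o ⥤ ModuleCat k) :
    Nonempty (limit F ≅ limit ((restrictAlt n o (ModuleCat k)).obj F)) := by
  exact ⟨(Functor.Initial.limitIso (altIncl_monotone n o).functor F).symm⟩
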